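/- Let v be a kinetic order for the network N. Then the following are equivalent: (i) N is injective over K_g(N)[v]; (ii) all the non-zero products det(A_{J,C}) det(Z(v)_{C,J}), taken over all sets C ⊆ {1,…,m} and J ⊆ {1,…,n} of cardinality s, have the same sign, and det(A_{J,C}) det(Z(v)_{C,J}) ≠ 0 for at least one choice of C and J. -/

import Mathlib

noncomputable section

namespace CRN

variable {n m : ℕ}

/-- The orthogonal complement of a subspace of `Fin n → ℝ` with respect to the
standard scalar product. -/
def orthComp (F : Submodule ℝ (Fin n → ℝ)) : Submodule ℝ (Fin n → ℝ) where
  carrier := {w | ∀ v ∈ F, ∑ i, w i * v i = 0}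
  add_mem' := by
    intro a b ha hb v hv
    have h1 := ha v hv
    have h2 := hb v hv
    have key : ∀ i, (a + b) i * v i = a i * v i + b i * v i := fun i => by
      simp [add_mul]
    calc ∑ i, (a + b) i * v i
        = ∑ i, (a i * v i + b i * v i) := Finset.sum_congr rfl (fun i _ => key i)
      _ = (∑ i, a i * v i) + ∑ i, b i * v i := Finset.sum_add_distrib
      _ = 0 := by rw [h1, h2, add_zero]
  zero_mem' := by
    intro v hv
    simp
  smul_mem' := by
    intro t a ha v hv
    have h1 := ha v hv
    simp only [Set.mem_setOf_eq, Pi.smul_apply, smul_eq_mul]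
    calc ∑ i, t * a i * v i
        = t * ∑ i, a i * v i := by
          rw [Finset.mul_sum]
          exact Finset.sum_congr rfl fun i _ => (mul_assoc _ _ _)
      _ = 0 := by rw [h1, mul_zero]

/-- `ω` is a reduced basis of `F^⊥`: it is a basis of the orthogonal complement of `F`,
`ω i` has `i`-th coordinate `1`, and `j`-th coordinate `0` for every `j < d`, `j ≠ i`. -/
def IsReducedBasis (d : ℕ) (F : Submodule ℝ (Fin n → ℝ)) (ω : Fin d → Fin n → ℝ) : Prop :=
  (∀ i, ω i ∈ orthComp F) ∧
  Submodule.span ℝ (Set.range ω) = orthComp F ∧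
  LinearIndependent ℝ ω ∧
  (∀ (i : Fin d) (j : Fin n), (j : ℕ) = (i : ℕ) → ω i j = 1) ∧
  (∀ (i : Fin d) (j : Fin n), (j : ℕ) < d → (j : ℕ) ≠ (i : ℕ) → ω i j = 0)

/-- The matrix whose top `d` rows are `ω` and whose remaining rows agree with `M`. -/
def tildeMat (d : ℕ) (ω : Fin d → Fin n → ℝ) (M : Matrix (Fin n) (Fin n) ℝ) :
    Matrix (Fin n) (Fin n) ℝ :=
  Matrix.of fun i j => if h : (i : ℕ) < d then ω ⟨(i : ℕ), h⟩ j else M i j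

/-- The stoichiometric matrix: `r`-th column is `y' r - y r`. -/
def stoich (y y' : Fin m → Fin n → ℝ) : Matrix (Fin n) (Fin m) ℝ :=
  Matrix.of fun i r => y' r i - y r i

/-- The stoichiometric subspace: the span of the reaction vectors `y' r - y r`. -/
def stoichSpan (y y' : Fin m → Fin n → ℝ) : Submodule ℝ (Fin n → ℝ) :=
  Submodule.span ℝ (Set.range fun r => (fun i => y' r i - y r i))

/-- The matrix whose `r`-th row is the kinetic-order vector `v r`. -/
def Zmat (v : Fin m → Fin n → ℝ) : Matrix (Fin m) (Fin n) ℝ :=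
  Matrix.of fun r i => v r i

/-- The Jacobian matrix of `f` at `c`. -/
def jac (f : (Fin n → ℝ) → Fin n → ℝ) (c : Fin n → ℝ) : Matrix (Fin n) (Fin n) ℝ :=
  Matrix.of fun i j => fderiv ℝ (fun x => f x i) c (Pi.single j 1)

/-- The species formation rate function of a kinetics `K`. -/
def specForm (y y' : Fin m → Fin n → ℝ) (K : Fin m → (Fin n → ℝ) → ℝ) (c : Fin n → ℝ) :
    Fin n → ℝ :=
  fun i => ∑ r, K r c * (y' r i - y r i)

/-- The power-law rate functions with rate vector `κ` and kinetic order `v`. -/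
def powerLaw (κ : Fin m → ℝ) (v : Fin m → Fin n → ℝ) : Fin m → (Fin n → ℝ) → ℝ :=
  fun r c => κ r * ∏ j, c j ^ v r j

/-- The power-law species formation rate function. -/
def plf (y y' : Fin m → Fin n → ℝ) (κ : Fin m → ℝ) (v : Fin m → Fin n → ℝ) (c : Fin n → ℝ) :
    Fin n → ℝ :=
  fun i => ∑ r, κ r * (∏ j, c j ^ v r j) * (y' r i - y r i)

/-- The extended rate function associated with a reduced basis `ω` and `f`. -/
def tildeF (d : ℕ) (ω : Fin d → Fin n → ℝ) (f : (Fin n → ℝ) → Fin n → ℝ) (c : Fin n → ℝ) :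
    Fin n → ℝ :=
  fun i => if h : (i : ℕ) < d then ∑ j, ω ⟨(i : ℕ), h⟩ j * c j else f c i

/-- The extended rate function with the bottom `s` components negated. -/
def hatF (d : ℕ) (ω : Fin d → Fin n → ℝ) (f : (Fin n → ℝ) → Fin n → ℝ) (c : Fin n → ℝ) :
    Fin n → ℝ :=
  fun i => if h : (i : ℕ) < d then ∑ j, ω ⟨(i : ℕ), h⟩ j * c j else -(f c i)

/-- Membership in the positive orthant. -/
def Pos (c : Fin n → ℝ) : Prop := ∀ i, 0 < c i

/-- The network is injective over the power-law kinetics with fixed kinetic order `v`. -/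
def InjOverPL (y y' : Fin m → Fin n → ℝ) (v : Fin m → Fin n → ℝ) : Prop :=
  ∀ κ : Fin m → ℝ, (∀ r, 0 < κ r) → ∀ a b : Fin n → ℝ, Pos a → Pos b → a ≠ b →
    a - b ∈ stoichSpan y y' → plf y y' κ v a ≠ plf y y' κ v b

/-- An influence specification takes values in `{-1, 0, 1}`. -/
def IsInfluence (I : Fin m → Fin n → ℝ) : Prop := ∀ r i, I r i = -1 ∨ I r i = 0 ∨ I r i = 1

/-- The influence specification associated with a kinetic order `v`. -/
def infOf (v : Fin m → Fin n → ℝ) : Fin m → Fin n → ℝ := fun r i => Real.sign (v r i)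

/-- `v ∈ Σ(I)`: the kinetic order `v` has associated influence specification `I`. -/
def InSigma (I : Fin m → Fin n → ℝ) (v : Fin m → Fin n → ℝ) : Prop :=
  ∀ r i, Real.sign (v r i) = I r i

/-- The partial order `I' ≼ I` on influence specifications. -/
def Preceq (I' I : Fin m → Fin n → ℝ) : Prop :=
  ∀ r i, (I' r i = 1 → I r i = 1) ∧ (I' r i = -1 → I r i = -1)

/-- The matrix `M̃(v)`: top `d` rows `ω`, bottom rows from `A ⬝ Z(v)`. -/
def Mt (y y' : Fin m → Fin n → ℝ) (d : ℕ) (ω : Fin d → Fin n → ℝ)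
    (v : Fin m → Fin n → ℝ) : Matrix (Fin n) (Fin n) ℝ :=
  tildeMat d ω (stoich y y' * Zmat v)

/-- The influence specification `I` has a signed determinant. -/
def SignedDet (y y' : Fin m → Fin n → ℝ) (d : ℕ) (ω : Fin d → Fin n → ℝ)
    (I : Fin m → Fin n → ℝ) : Prop :=
  ∀ v w, InSigma I v → InSigma I w →
    Real.sign (Mt y y' d ω v).det = Real.sign (Mt y y' d ω w).det

/-- The influence specification `I` is sign-nonsingular (SNS). -/
def IsSNS (y y' : Fin m → Fin n → ℝ) (d : ℕ) (ω : Fin d → Fin n → ℝ)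
    (I : Fin m → Fin n → ℝ) : Prop :=
  SignedDet y y' d ω I ∧ ∀ v, InSigma I v → (Mt y y' d ω v).det ≠ 0

/-- `Ω` is an admissible kinetics domain: `ℝ^n_{>0} ⊆ Ω ⊆ ℝ^n_{≥0}`. -/
def KinDom (Ω : Set (Fin n → ℝ)) : Prop :=
  {c : Fin n → ℝ | ∀ i, 0 < c i} ⊆ Ω ∧ Ω ⊆ {c : Fin n → ℝ | ∀ i, 0 ≤ c i}

/-- The rate functions are nonnegative on the domain. -/
def KinNonneg (Ω : Set (Fin n → ℝ)) (K : Fin m → (Fin n → ℝ) → ℝ) : Prop :=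
  ∀ r, ∀ c ∈ Ω, 0 ≤ K r c

/-- `I_r^+ ⊆ supp c`. -/
def PosSupp (I : Fin m → Fin n → ℝ) (r : Fin m) (c : Fin n → ℝ) : Prop :=
  ∀ i, I r i = 1 → c i ≠ 0

/-- The kinetics `K` respects the influence specification `I`. -/
def Respects (Ω : Set (Fin n → ℝ)) (K : Fin m → (Fin n → ℝ) → ℝ)
    (I : Fin m → Fin n → ℝ) : Prop :=
  ∀ c ∈ Ω, ∀ r, (0 < K r c ↔ PosSupp I r c)

/-- The kinetics `K` is strictly monotonic with respect to `I`. -/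
def StrictlyMonotonic (Ω : Set (Fin n → ℝ)) (K : Fin m → (Fin n → ℝ) → ℝ)
    (I : Fin m → Fin n → ℝ) : Prop :=
  Respects Ω K I ∧
  ∀ (r : Fin m) (c d : Fin n → ℝ), c ∈ Ω → d ∈ Ω → PosSupp I r c → PosSupp I r d →
    ∀ i, (∀ j, j ≠ i → c j = d j) →
      ((I r i = 1 → c i < d i → K r c < K r d) ∧
       (I r i = -1 → c i < d i → K r d < K r c) ∧
       (I r i = 0 → K r c = K r d))

/-- The kinetics `K` is differentiable with respect to `I`. -/
def DiffWrt (Ω : Set (Fin n → ℝ)) (K : Fin m → (Fin n → ℝ) → ℝ)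
    (I : Fin m → Fin n → ℝ) : Prop :=
  Respects Ω K I ∧
  (∀ r, ∀ c ∈ Ω, ContinuousWithinAt (K r) Ω c) ∧
  (∀ (r : Fin m) (c : Fin n → ℝ), (∀ i, 0 < c i) → DifferentiableAt ℝ (K r) c) ∧
  (∀ (r : Fin m) (c : Fin n → ℝ), (∀ i, 0 < c i) → ∀ i,
     Real.sign (fderiv ℝ (K r) c (Pi.single i 1)) = I r i)

/-- `a` and `b` are non-overlapping with respect to `I`. -/
def NonOverlap (I : Fin m → Fin n → ℝ) (a b : Fin n → ℝ) : Prop :=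
  ∀ r, ¬ PosSupp I r a → PosSupp I r b

/-- The kinetics `K` is weakly monotonic with respect to `I`. -/
def WeaklyMonotonic (y : Fin m → Fin n → ℝ) (Ω : Set (Fin n → ℝ))
    (K : Fin m → (Fin n → ℝ) → ℝ) (I : Fin m → Fin n → ℝ) : Prop :=
  ∀ a ∈ Ω, ∀ b ∈ Ω, NonOverlap I a b → ∀ r,
    (K r b < K r a → ∃ i, Real.sign (a i - b i) = I r i ∧ I r i ≠ 0) ∧
    (K r a = K r b →
      ((∀ i, y r i ≠ 0 → a i = b i) ∨
        ∃ i j, i ≠ j ∧ Real.sign (a i - b i) = I r i ∧ I r i ≠ 0 ∧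
          Real.sign (a j - b j) = -(I r j) ∧ I r j ≠ 0))

/-- A square real matrix is a P-matrix: all principal minors are positive. -/
def IsPMatrix {N : ℕ} (M : Matrix (Fin N) (Fin N) ℝ) : Prop :=
  ∀ J : Finset (Fin N),
    0 < (M.submatrix (fun i : {x // x ∈ J} => (i : Fin N))
          (fun j : {x // x ∈ J} => (j : Fin N))).det

/-- The minor `det(A_{J,C})` of the stoichiometric matrix. -/
def subDetA (y y' : Fin m → Fin n → ℝ) (s : ℕ) (J : Finset (Fin n)) (C : Finset (Fin m))
    (hJ : J.card = s) (hC : C.card = s) : ℝ :=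
  ((stoich y y').submatrix (fun a => (J.orderIsoOfFin hJ a).1)
    (fun b => (C.orderIsoOfFin hC b).1)).det

/-- The minor `det(Z(v)_{C,J})`. -/
def subDetZ (v : Fin m → Fin n → ℝ) (s : ℕ) (C : Finset (Fin m)) (J : Finset (Fin n))
    (hC : C.card = s) (hJ : J.card = s) : ℝ :=
  ((Zmat v).submatrix (fun a => (C.orderIsoOfFin hC a).1)
    (fun b => (J.orderIsoOfFin hJ b).1)).det

/-- The Hill-type species formation rate function. -/
def hillf (y y' : Fin m → Fin n → ℝ) (κ : Fin m → ℝ) (δ v : Fin m → Fin n → ℝ)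
    (c : Fin n → ℝ) : Fin n → ℝ :=
  fun i => ∑ r, κ r * (∏ j, (c j ^ v r j) / (δ r j + c j ^ v r j)) * (y' r i - y r i)



section DetKer

open Matrix

variable {n m s : ℕ}

/-- The enumeration of a finset of cardinality `s`. -/
noncomputable def eS {k : ℕ} (C : {C : Finset (Fin k) // C.card = s}) : Fin s → Fin k :=
  fun a => (C.1.orderIsoOfFin C.2 a : Fin k)

end DetKer

open Equiv Equiv.Perm Finset Function Matrix

variable {R : Type*} [CommRing R]

local notation "ε " σ:arg => ((Equiv.Perm.sign σ : ℤ) : R)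

theorem sum_perm_eq_det_mul {s : ℕ} (M N : Matrix (Fin s) (Fin s) R) :
    ∑ τ : Perm (Fin s), ∑ σ : Perm (Fin s), ε σ * ∏ i, M (σ i) (τ i) * N (τ i) i
      = det M * det N := by
  rw [← det_mul]
  refine Eq.symm ?_
  calc
    det (M * N) = ∑ p : Fin s → Fin s, ∑ σ : Perm (Fin s),
        ε σ * ∏ i, M (σ i) (p i) * N (p i) i := by
      simp only [det_apply', Matrix.mul_apply, prod_univ_sum, mul_sum, Fintype.piFinset_univ]
      rw [Finset.sum_comm]
    _ = ∑ p : Fin s → Fin s with Bijective p, ∑ σ : Perm (Fin s),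
        ε σ * ∏ i, M (σ i) (p i) * N (p i) i := by
      refine (sum_subset (filter_subset _ _) fun f _ hbij ↦ Matrix.det_mul_aux ?_).symm
      simpa only [true_and, mem_filter, mem_univ] using hbij
    _ = ∑ τ : Perm (Fin s), ∑ σ : Perm (Fin s), ε σ * ∏ i, M (σ i) (τ i) * N (τ i) i :=
      sum_bij (fun p h ↦ Equiv.ofBijective p (mem_filter.1 h).2) (fun _ _ ↦ mem_univ _)
        (fun _ _ _ _ h ↦ by injection h)
        (fun b _ ↦ ⟨b, mem_filter.2 ⟨mem_univ _, b.bijective⟩, coe_fn_injective rfl⟩)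
        fun _ _ ↦ rfl

/-- The image of an injective `p : Fin s → Fin m`, as a finset of cardinality `s`. -/
def imSet {s m : ℕ} (p : Fin s → Fin m) (hp : Function.Injective p) :
    {C : Finset (Fin m) // C.card = s} :=
  ⟨Finset.univ.image p, by
    rw [Finset.card_image_of_injective _ hp, Finset.card_univ, Fintype.card_fin]⟩

/-- The permutation comparing `p` with the increasing enumeration of its image. -/
noncomputable def permOf {s m : ℕ} (p : Fin s → Fin m) (hp : Function.Injective p) : Perm (Fin s) :=
  Equiv.ofBijective
    (fun k => ((imSet p hp).1.orderIsoOfFin (imSet p hp).2).symm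
      ⟨p k, Finset.mem_image_of_mem _ (Finset.mem_univ k)⟩)
    (by
      rw [← Finite.injective_iff_bijective]
      intro a b hab
      have := congrArg (fun x => ((((imSet p hp).1.orderIsoOfFin (imSet p hp).2)) x : Fin m)) hab
      simp only [OrderIso.apply_symm_apply] at this
      exact hp this)

theorem permOf_apply {s m : ℕ} (p : Fin s → Fin m) (hp : Function.Injective p)
    (C : Finset (Fin m)) (h : C.card = s) (hC : C = Finset.univ.image p) (k : Fin s) :
    ((C.orderIsoOfFin h) (permOf p hp k) : Fin m) = p k := by
  subst hC
  have h1 : permOf p hp k = ((Finset.univ.image p).orderIsoOfFin h).symm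
      ⟨p k, Finset.mem_image_of_mem _ (Finset.mem_univ k)⟩ := rfl
  rw [h1, OrderIso.apply_symm_apply]

theorem permOf_apply' {s m : ℕ} (p : Fin s → Fin m) (hp : Function.Injective p) (k : Fin s) :
    (((imSet p hp).1.orderIsoOfFin (imSet p hp).2) (permOf p hp k) : Fin m) = p k :=
  permOf_apply p hp _ _ rfl k

private theorem pair_ext {s m : ℕ} (C₁ C₂ : Finset (Fin m)) (h₁ : C₁.card = s)
    (h₂ : C₂.card = s) (τ₁ τ₂ : Perm (Fin s)) (hC : C₁ = C₂)
    (hτ : ∀ k, ((C₁.orderIsoOfFin h₁ (τ₁ k) : Fin m)) = ((C₂.orderIsoOfFin h₂ (τ₂ k) : Fin m))) :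
    ((⟨⟨C₁, h₁⟩, τ₁⟩ : {C : Finset (Fin m) // C.card = s} × Perm (Fin s)) = ⟨⟨C₂, h₂⟩, τ₂⟩) := by
  subst hC
  have hττ : τ₁ = τ₂ := by
    apply Equiv.ext
    intro k
    have h3 : (C₁.orderIsoOfFin h₁ (τ₁ k)) = (C₁.orderIsoOfFin h₁ (τ₂ k)) := Subtype.ext (hτ k)
    exact (C₁.orderIsoOfFin h₁).injective h3
  rw [hττ]

theorem cauchyBinet {s m : ℕ} (M : Matrix (Fin s) (Fin m) R) (N : Matrix (Fin m) (Fin s) R) :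
    det (M * N) = ∑ C : {C : Finset (Fin m) // C.card = s},
      det (M.submatrix id (fun b => ((C.1.orderIsoOfFin C.2 b : Fin m)))) *
      det (N.submatrix (fun a => ((C.1.orderIsoOfFin C.2 a : Fin m))) id) := by
  have h2 : ∀ p : Fin s → Fin m, ¬ Injective p →
      (∑ σ : Perm (Fin s), ε σ * ∏ x, M (σ x) (p x) * N (p x) x) = 0 := by
    intro p H
    obtain ⟨i, j, hpij, hij⟩ : ∃ i j, p i = p j ∧ i ≠ j := by
      rw [Injective] at H
      push_neg at H
      exact H
    exact
      sum_involution (fun σ _ => σ * Equiv.swap i j)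
        (fun σ _ => by
          have : (∏ x, M (σ x) (p x)) = ∏ x, M ((σ * Equiv.swap i j) x) (p x) :=
            Fintype.prod_equiv (swap i j) _ _ (by simp [apply_swap_eq_self hpij])
          simp [this, sign_swap hij, -sign_swap', prod_mul_distrib])
        (fun σ _ _ => (not_congr mul_swap_eq_iff).mpr hij) (fun _ _ => mem_univ _) fun σ _ =>
        mul_swap_involutive i j σ
  have h3 : det (M * N) = ∑ p : Fin s → Fin m with Injective p, ∑ σ : Perm (Fin s),
      ε σ * ∏ i, M (σ i) (p i) * N (p i) i := by
    calc
      det (M * N) = ∑ p : Fin s → Fin m, ∑ σ : Perm (Fin s),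
          ε σ * ∏ i, M (σ i) (p i) * N (p i) i := by
        simp only [det_apply', Matrix.mul_apply, prod_univ_sum, mul_sum, Fintype.piFinset_univ]
        rw [Finset.sum_comm]
      _ = _ := by
        refine (sum_subset (filter_subset _ _) fun f _ hinj ↦ h2 f ?_).symm
        simpa only [true_and, mem_filter, mem_univ] using hinj
  rw [h3]
  have h4 : ∑ p : Fin s → Fin m with Injective p, ∑ σ : Perm (Fin s),
        ε σ * ∏ i, M (σ i) (p i) * N (p i) i
      = ∑ q : {C : Finset (Fin m) // C.card = s} × Perm (Fin s), ∑ σ : Perm (Fin s),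
        ε σ * ∏ i, M (σ i) (q.1.1.orderIsoOfFin q.1.2 (q.2 i)) *
          N (q.1.1.orderIsoOfFin q.1.2 (q.2 i)) i := by
    refine Finset.sum_bij
      (fun p hp => (⟨imSet p (by simpa using hp), permOf p (by simpa using hp)⟩ :
        {C : Finset (Fin m) // C.card = s} × Perm (Fin s)))
      (fun _ _ => mem_univ _) ?_ ?_ ?_
    · -- injectivity
      intro p hp q hq heq
      funext k
      have h1 := congrArg (fun z : {C : Finset (Fin m) // C.card = s} × Perm (Fin s) =>
        ((z.1.1.orderIsoOfFin z.1.2 (z.2 k) : Fin m))) heq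
      simpa only [permOf_apply'] using h1
    · -- surjectivity
      rintro ⟨⟨C, hC⟩, τ⟩ -
      have hpinj : Injective (fun k => (C.orderIsoOfFin hC (τ k) : Fin m)) := by
        intro a b hab
        exact τ.injective ((C.orderIsoOfFin hC).injective (Subtype.ext hab))
      refine ⟨fun k => (C.orderIsoOfFin hC (τ k) : Fin m), ?_, ?_⟩
      · simp only [mem_filter, mem_univ, true_and]
        exact hpinj
      · refine pair_ext _ _ _ _ _ _ ?_ ?_
        · ext x
          simp only [imSet, Finset.mem_image, mem_univ, true_and]
          constructor
          · rintro ⟨k, rfl⟩; exact (C.orderIsoOfFin hC (τ k)).2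
          · intro hx
            refine ⟨τ.symm ((C.orderIsoOfFin hC).symm ⟨x, hx⟩), ?_⟩
            simp
        · intro k
          exact permOf_apply _ _ _ _ rfl k
    · intro p hp
      dsimp only
      refine Finset.sum_congr rfl fun σ _ => ?_
      congr 1
      refine Finset.prod_congr rfl fun i _ => ?_
      rw [permOf_apply']
  rw [h4, Fintype.sum_prod_type]
  refine Finset.sum_congr rfl fun C _ => ?_
  exact sum_perm_eq_det_mul (M.submatrix id fun b => (C.1.orderIsoOfFin C.2 b : Fin m))
    (N.submatrix (fun a => (C.1.orderIsoOfFin C.2 a : Fin m)) id)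

theorem cauchyBinet' {s m : ℕ} {R : Type*} [CommRing R] (M : Matrix (Fin s) (Fin m) R)
    (N : Matrix (Fin m) (Fin s) R) :
    det (M * N) = ∑ C : {C : Finset (Fin m) // C.card = s},
      det (M.submatrix id (CRN.eS C)) * det (N.submatrix (CRN.eS C) id) :=
  cauchyBinet M N

section DetKer

open Matrix

variable {n m s : ℕ}

theorem prod_eS {k : ℕ} (lam : Fin k → ℝ) (C : {C : Finset (Fin k) // C.card = s}) :
    ∏ i : Fin s, lam (eS C i) = ∏ r ∈ C.1, lam r := by
  rw [← Finset.prod_coe_sort C.1 lam]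
  exact Fintype.prod_equiv (C.1.orderIsoOfFin C.2).toEquiv _ _ (fun i => rfl)

theorem diag_mul_submatrix {k l : ℕ} (d : Fin k → ℝ) (X : Matrix (Fin k) (Fin l) ℝ)
    (e : Fin s → Fin k) :
    (Matrix.diagonal d * X).submatrix e id
      = Matrix.diagonal (d ∘ e) * X.submatrix e id := by
  ext i j
  simp [Matrix.diagonal_mul, Matrix.submatrix_apply]

theorem submatrix_mul_left {a b c a' : ℕ} (X : Matrix (Fin a) (Fin b) ℝ)
    (Y : Matrix (Fin b) (Fin c) ℝ) (e : Fin a' → Fin a) :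
    (X * Y).submatrix e id = X.submatrix e id * Y := by
  have h := Matrix.submatrix_mul_equiv X Y e (Equiv.refl (Fin b)) (id : Fin c → Fin c)
  rw [← h]
  congr

theorem submatrix_mul_right {a b c c' : ℕ} (X : Matrix (Fin a) (Fin b) ℝ)
    (Y : Matrix (Fin b) (Fin c) ℝ) (e : Fin c' → Fin c) :
    (X * Y).submatrix id e = X * Y.submatrix id e := by
  have h := Matrix.submatrix_mul_equiv X Y (id : Fin a → Fin a) (Equiv.refl (Fin b)) e
  rw [← h]
  congr

/-- Column `r` of a product is the matrix applied to column `r`. -/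
theorem col_mul {a b c : ℕ} (X : Matrix (Fin a) (Fin b) ℝ) (Y : Matrix (Fin b) (Fin c) ℝ)
    (r : Fin c) : (fun i => (X * Y) i r) = X.mulVec (fun k => Y k r) := by
  funext i
  simp [Matrix.mul_apply, Matrix.mulVec, dotProduct]

theorem mulVec_stoich_mem (y y' : Fin m → Fin n → ℝ) (t : Fin m → ℝ) :
    (stoich y y').mulVec t ∈ stoichSpan y y' := by
  have h : (stoich y y').mulVec t = ∑ r, t r • (fun i => y' r i - y r i) := by
    funext i
    simp only [Matrix.mulVec, dotProduct, stoich, Matrix.of_apply,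
      Finset.sum_apply, Pi.smul_apply, smul_eq_mul]
    exact Finset.sum_congr rfl fun r _ => mul_comm _ _
  rw [h]
  exact Submodule.sum_mem _ fun r _ => Submodule.smul_mem _ _
    (Submodule.subset_span ⟨r, rfl⟩)

theorem col_stoich_mem (y y' : Fin m → Fin n → ℝ) (r : Fin m) :
    (fun i => stoich y y' i r) ∈ stoichSpan y y' :=
  Submodule.subset_span ⟨r, rfl⟩

/-- From the projection property, `B * (Bp * A) = A`. -/
theorem hA_of_hBP (y y' : Fin m → Fin n → ℝ) (B : Matrix (Fin n) (Fin s) ℝ)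
    (Bp : Matrix (Fin s) (Fin n) ℝ)
    (hBP : ∀ w ∈ stoichSpan y y', B.mulVec (Bp.mulVec w) = w) :
    B * (Bp * stoich y y') = stoich y y' := by
  ext i r
  have h1 := congrFun (col_mul B (Bp * stoich y y') r) i
  have h3 : (fun k => (Bp * stoich y y') k r) = Bp.mulVec (fun k => stoich y y' k r) :=
    col_mul Bp (stoich y y') r
  rw [h1, h3, hBP _ (col_stoich_mem y y' r)]

end DetKer

section DetKer2

open Matrix

variable {n m s : ℕ}

theorem detP_expand (y y' : Fin m → Fin n → ℝ) (v : Fin m → Fin n → ℝ)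
    (B : Matrix (Fin n) (Fin s) ℝ) (Bp : Matrix (Fin s) (Fin n) ℝ)
    (hA : B * (Bp * stoich y y') = stoich y y') (lam : Fin m → ℝ) (mu : Fin n → ℝ) :
    ((Bp * stoich y y') * (Matrix.diagonal lam * (Zmat v * (Matrix.diagonal mu * B)))).det
      = ∑ C : {C : Finset (Fin m) // C.card = s}, ∑ J : {J : Finset (Fin n) // J.card = s},
          (∏ r ∈ C.1, lam r) * (∏ j ∈ J.1, mu j) *
            (subDetA y y' s J.1 C.1 J.2 C.2 * subDetZ v s C.1 J.1 C.2 J.2) := by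
  rw [cauchyBinet']
  refine Finset.sum_congr rfl fun C _ => ?_
  -- notation
  set A := stoich y y' with hAdef
  set Z := Zmat v with hZdef
  have hsub2 : ((Matrix.diagonal lam * (Z * (Matrix.diagonal mu * B))).submatrix (eS C) id)
      = Matrix.diagonal (lam ∘ eS C) *
        ((Z.submatrix (eS C) id) * (Matrix.diagonal mu * B)) := by
    rw [diag_mul_submatrix, submatrix_mul_left]
  have hdet2 : ((Matrix.diagonal lam * (Z * (Matrix.diagonal mu * B))).submatrix (eS C) id).det
      = (∏ r ∈ C.1, lam r) * ((Z.submatrix (eS C) id) * (Matrix.diagonal mu * B)).det := by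
    rw [hsub2, det_mul, det_diagonal]
    congr 1
    exact prod_eS lam C
  have hdet3 : ((Z.submatrix (eS C) id) * (Matrix.diagonal mu * B)).det
      = ∑ J : {J : Finset (Fin n) // J.card = s},
          (∏ j ∈ J.1, mu j) * ((Z.submatrix (eS C) (eS J)).det * (B.submatrix (eS J) id).det) := by
    rw [cauchyBinet']
    refine Finset.sum_congr rfl fun J _ => ?_
    have e1 : (Z.submatrix (eS C) id).submatrix id (eS J) = Z.submatrix (eS C) (eS J) := by
      rw [Matrix.submatrix_submatrix]
      rfl
    have e2 : ((Matrix.diagonal mu * B).submatrix (eS J) id)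
        = Matrix.diagonal (mu ∘ eS J) * B.submatrix (eS J) id := diag_mul_submatrix _ _ _
    rw [e1, e2, det_mul, det_diagonal]
    rw [show ∏ i : Fin s, (mu ∘ eS J) i = ∏ j ∈ J.1, mu j from prod_eS mu J]
    ring
  -- minor identity: det A_{J,C} = det B_J * det T_C
  have hminor : ∀ J : {J : Finset (Fin n) // J.card = s},
      (B.submatrix (eS J) id).det * (((Bp * A).submatrix id (eS C)).det)
        = subDetA y y' s J.1 C.1 J.2 C.2 := by
    intro J
    have h1 : (A.submatrix (eS J) (eS C))
        = B.submatrix (eS J) id * (Bp * A).submatrix id (eS C) := by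
      conv_lhs => rw [← hA]
      rw [← Matrix.submatrix_mul_equiv B (Bp * A) (eS J) (Equiv.refl (Fin s)) (eS C),
        Equiv.coe_refl]
    have h2 : subDetA y y' s J.1 C.1 J.2 C.2 = (A.submatrix (eS J) (eS C)).det := rfl
    rw [h2, h1, det_mul]
  rw [hdet2, hdet3, Finset.mul_sum, Finset.mul_sum]
  refine Finset.sum_congr rfl fun J _ => ?_
  have h3 : subDetZ v s C.1 J.1 C.2 J.2 = (Z.submatrix (eS C) (eS J)).det := rfl
  rw [h3, ← hminor J]
  ring

theorem det_ne_iff_ker (y y' : Fin m → Fin n → ℝ) (v : Fin m → Fin n → ℝ)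
    (B : Matrix (Fin n) (Fin s) ℝ) (Bp : Matrix (Fin s) (Fin n) ℝ)
    (hBmem : ∀ x, B.mulVec x ∈ stoichSpan y y')
    (hBinj : ∀ x, B.mulVec x = 0 → x = 0)
    (hBP : ∀ w ∈ stoichSpan y y', B.mulVec (Bp.mulVec w) = w)
    (lam : Fin m → ℝ) (mu : Fin n → ℝ) :
    ((Bp * stoich y y') * (Matrix.diagonal lam * (Zmat v * (Matrix.diagonal mu * B)))).det ≠ 0
      ↔ ∀ w ∈ stoichSpan y y',
          (stoich y y').mulVec ((Matrix.diagonal lam).mulVec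
            ((Zmat v).mulVec ((Matrix.diagonal mu).mulVec w))) = 0 → w = 0 := by
  set A := stoich y y'
  set Z := Zmat v
  set P := (Bp * A) * (Matrix.diagonal lam * (Z * (Matrix.diagonal mu * B))) with hP
  have hPvec : ∀ x, P.mulVec x
      = Bp.mulVec (A.mulVec ((Matrix.diagonal lam).mulVec
          (Z.mulVec ((Matrix.diagonal mu).mulVec (B.mulVec x))))) := by
    intro x
    rw [hP]
    simp only [Matrix.mulVec_mulVec, Matrix.mul_assoc]
  have hM : ∀ w : Fin n → ℝ,
      A.mulVec ((Matrix.diagonal lam).mulVec (Z.mulVec ((Matrix.diagonal mu).mulVec w)))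
        ∈ stoichSpan y y' := fun w => mulVec_stoich_mem y y' _
  constructor
  · intro hdet w hw hMw
    have hPw : P.mulVec (Bp.mulVec w) = 0 := by
      rw [hPvec, hBP w hw, hMw, Matrix.mulVec_zero]
    have hker : Bp.mulVec w = 0 := by
      by_contra hne
      exact hdet ((Matrix.exists_mulVec_eq_zero_iff).mp ⟨Bp.mulVec w, hne, hPw⟩)
    have := hBP w hw
    rw [hker, Matrix.mulVec_zero] at this
    exact this.symm
  · intro hker hdet
    obtain ⟨x, hx0, hPx⟩ := (Matrix.exists_mulVec_eq_zero_iff).mpr hdet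
    set w := B.mulVec x with hw
    have hwmem : w ∈ stoichSpan y y' := hBmem x
    have hMw : A.mulVec ((Matrix.diagonal lam).mulVec
        (Z.mulVec ((Matrix.diagonal mu).mulVec w))) = 0 := by
      have h1 : Bp.mulVec (A.mulVec ((Matrix.diagonal lam).mulVec
          (Z.mulVec ((Matrix.diagonal mu).mulVec w)))) = 0 := by
        rw [← hPvec x]; exact hPx
      have h2 := hBP _ (hM w)
      rw [h1, Matrix.mulVec_zero] at h2
      exact h2.symm
    have := hker w hwmem hMw
    exact hx0 (hBinj x (hw ▸ this))

end DetKer2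

section ExistsB

open Matrix

variable {n m s : ℕ}

theorem exists_B (y y' : Fin m → Fin n → ℝ)
    (hs : Module.finrank ℝ (stoichSpan y y') = s) :
    ∃ (B : Matrix (Fin n) (Fin s) ℝ) (Bp : Matrix (Fin s) (Fin n) ℝ),
      (∀ x, B.mulVec x ∈ stoichSpan y y') ∧
      (∀ x, B.mulVec x = 0 → x = 0) ∧
      (∀ w ∈ stoichSpan y y', B.mulVec (Bp.mulVec w) = w) := by
  classical
  set Γ := stoichSpan y y' with hΓ
  have : Module.Finite ℝ Γ := by infer_instance
  let b : Module.Basis (Fin s) ℝ Γ := Module.finBasisOfFinrankEq ℝ Γ hs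
  obtain ⟨g, hg⟩ := LinearMap.exists_extend (b.equivFun.toLinearMap)
  let B : Matrix (Fin n) (Fin s) ℝ := Matrix.of fun i j => ((b j : Fin n → ℝ) i)
  let Bp : Matrix (Fin s) (Fin n) ℝ := LinearMap.toMatrix' g
  have hBvec : ∀ x : Fin s → ℝ, B.mulVec x = ((∑ j, x j • b j : Γ) : Fin n → ℝ) := by
    intro x
    funext i
    simp only [Matrix.mulVec, dotProduct, B, Matrix.of_apply]
    rw [Submodule.coe_sum]
    rw [Finset.sum_apply]
    refine Finset.sum_congr rfl fun j _ => ?_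
    simp [mul_comm]
  have hBsymm : ∀ x : Fin s → ℝ, (∑ j, x j • b j : Γ) = b.equivFun.symm x := by
    intro x
    rw [Module.Basis.equivFun_symm_apply]
  refine ⟨B, Bp, ?_, ?_, ?_⟩
  · intro x
    rw [hBvec x]
    exact Submodule.coe_mem _
  · intro x hx
    rw [hBvec x, hBsymm x] at hx
    have h0 : (b.equivFun.symm x : Γ) = 0 := by
      exact Subtype.ext hx
    have := b.equivFun.symm.injective (by rw [h0, map_zero] : b.equivFun.symm x = b.equivFun.symm 0)
    exact this
  · intro w hw
    have hBp : Bp.mulVec w = g w := by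
      have := Matrix.toLin'_toMatrix' g
      calc Bp.mulVec w = Matrix.toLin' Bp w := (Matrix.toLin'_apply Bp w).symm
        _ = g w := by rw [this]
    have hgw : g w = b.equivFun ⟨w, hw⟩ := by
      have := congrFun (congrArg (fun (f : Γ →ₗ[ℝ] (Fin s → ℝ)) => (f : Γ → (Fin s → ℝ)))
        hg) ⟨w, hw⟩
      simpa using this
    rw [hBp, hgw, hBvec, hBsymm, LinearEquiv.symm_apply_apply]
end ExistsB

section Analysis

open Matrix

variable {n m s : ℕ}

/-- `(e^t - 1)/t`, extended by `1` at `t = 0`. -/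
noncomputable def psi (t : ℝ) : ℝ := if t = 0 then 1 else (Real.exp t - 1) / t

theorem psi_pos (t : ℝ) : 0 < psi t := by
  unfold psi
  rcases lt_trichotomy t 0 with ht | ht | ht
  · rw [if_neg (ne_of_lt ht)]
    apply div_pos_of_neg_of_neg
    · have : Real.exp t < 1 := by
        rw [show (1 : ℝ) = Real.exp 0 by simp]
        exact Real.exp_lt_exp.mpr ht
      linarith
    · exact ht
  · rw [ht, if_pos rfl]; norm_num
  · rw [if_neg (ne_of_gt ht)]
    apply div_pos
    · have : 1 < Real.exp t := by
        rw [show (1 : ℝ) = Real.exp 0 by simp]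
        exact Real.exp_lt_exp.mpr ht
      linarith
    · exact ht

theorem exp_sub_one_eq (t : ℝ) : Real.exp t - 1 = psi t * t := by
  unfold psi
  by_cases h : t = 0
  · simp [h]
  · rw [if_neg h, div_mul_cancel₀ _ h]

theorem prod_rpow_eq_exp (c : Fin n → ℝ) (hc : Pos c) (vr : Fin n → ℝ) :
    ∏ j, c j ^ vr j = Real.exp (∑ j, vr j * Real.log (c j)) := by
  rw [Real.exp_sum]
  refine Finset.prod_congr rfl fun j _ => ?_
  rw [Real.rpow_def_of_pos (hc j), mul_comm]

/-- The fundamental difference formula for the power-law rate function. -/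
theorem plf_sub (y y' : Fin m → Fin n → ℝ) (v : Fin m → Fin n → ℝ)
    (κ : Fin m → ℝ) (a b : Fin n → ℝ) (ha : Pos a) (hb : Pos b) (i : Fin n) :
    plf y y' κ v a i - plf y y' κ v b i
      = (stoich y y').mulVec (fun r =>
          (κ r * Real.exp (∑ j, v r j * Real.log (b j)) *
            psi ((Zmat v).mulVec (fun j => Real.log (a j) - Real.log (b j)) r)) *
          ((Zmat v).mulVec (fun j => Real.log (a j) - Real.log (b j)) r)) i := by
  unfold plf
  rw [← Finset.sum_sub_distrib]
  simp only [Matrix.mulVec, dotProduct, stoich, Zmat, Matrix.of_apply]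
  refine Finset.sum_congr rfl fun r _ => ?_
  set t : ℝ := ∑ x, v r x * (Real.log (a x) - Real.log (b x)) with ht
  have hPa : ∏ j, a j ^ v r j
      = Real.exp (∑ j, v r j * Real.log (b j)) * Real.exp t := by
    rw [prod_rpow_eq_exp a ha, ← Real.exp_add]
    congr 1
    rw [ht, ← Finset.sum_add_distrib]
    refine Finset.sum_congr rfl fun j _ => by ring
  have hPb : ∏ j, b j ^ v r j = Real.exp (∑ j, v r j * Real.log (b j)) :=
    prod_rpow_eq_exp b hb (v r)
  rw [hPa, hPb]
  have hexp : Real.exp t = 1 + psi t * t := by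
    have := exp_sub_one_eq t
    linarith
  rw [hexp]
  ring

theorem inj_iff_ker (y y' : Fin m → Fin n → ℝ) (v : Fin m → Fin n → ℝ) :
    InjOverPL y y' v ↔
      ∀ (lam : Fin m → ℝ), (∀ r, 0 < lam r) → ∀ (mu : Fin n → ℝ), (∀ j, 0 < mu j) →
        ∀ w ∈ stoichSpan y y',
          (stoich y y').mulVec ((Matrix.diagonal lam).mulVec
            ((Zmat v).mulVec ((Matrix.diagonal mu).mulVec w))) = 0 → w = 0 := by
  constructor
  · -- injectivity implies the kernel condition
    intro hinj lam hlam mu hmu w hw hMw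
    by_contra hw0
    set u : Fin n → ℝ := fun j => mu j * w j with hu
    set b : Fin n → ℝ := fun j => if w j = 0 then 1 else w j / (Real.exp (u j) - 1) with hbdef
    set a : Fin n → ℝ := fun j => b j * Real.exp (u j) with hadef
    have hexpne : ∀ j, w j ≠ 0 → Real.exp (u j) - 1 ≠ 0 := by
      intro j hj
      have huj : u j ≠ 0 := mul_ne_zero (ne_of_gt (hmu j)) hj
      intro hcon
      exact huj (by
        have : Real.exp (u j) = 1 := by linarith
        simpa [Real.exp_eq_one_iff] using this)
    have hb : Pos b := by
      intro j
      simp only [hbdef]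
      by_cases hj : w j = 0
      · simp [hj]
      · rw [if_neg hj]
        rcases lt_or_gt_of_ne hj with hneg | hpos
        · have huj : u j < 0 := mul_neg_of_pos_of_neg (hmu j) hneg
          have : Real.exp (u j) < 1 := by
            rw [show (1:ℝ) = Real.exp 0 by simp]
            exact Real.exp_lt_exp.mpr huj
          exact div_pos_of_neg_of_neg hneg (by linarith)
        · have huj : 0 < u j := mul_pos (hmu j) hpos
          have : 1 < Real.exp (u j) := by
            rw [show (1:ℝ) = Real.exp 0 by simp]
            exact Real.exp_lt_exp.mpr huj
          exact div_pos hpos (by linarith)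
    have ha : Pos a := fun j => mul_pos (hb j) (Real.exp_pos _)
    have hab : ∀ j, a j - b j = w j := by
      intro j
      rw [hadef, hbdef]
      by_cases hj : w j = 0
      · simp only [if_pos hj, hj]
        have : u j = 0 := by rw [hu]; simp [hj]
        rw [this]
        simp
      · simp only [if_neg hj]
        have h1 : w j / (Real.exp (u j) - 1) * Real.exp (u j) - w j / (Real.exp (u j) - 1)
            = w j / (Real.exp (u j) - 1) * (Real.exp (u j) - 1) := by ring
        rw [h1, div_mul_cancel₀ _ (hexpne j hj)]
    have habne : a ≠ b := by
      intro hcon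
      apply hw0
      funext j
      have := hab j
      rw [hcon] at this
      simpa using this.symm
    have habG : a - b ∈ stoichSpan y y' := by
      have : a - b = w := funext hab
      rw [this]; exact hw
    have hlog : ∀ j, Real.log (a j) - Real.log (b j) = u j := by
      intro j
      rw [hadef]
      simp only []
      rw [Real.log_mul (ne_of_gt (hb j)) (Real.exp_ne_zero _), Real.log_exp]
      ring
    set t : Fin m → ℝ := (Zmat v).mulVec u with htdef
    set κ : Fin m → ℝ := fun r =>
      lam r / (Real.exp (∑ j, v r j * Real.log (b j)) * psi (t r)) with hκdef
    have hκpos : ∀ r, 0 < κ r := fun r =>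
      div_pos (hlam r) (mul_pos (Real.exp_pos _) (psi_pos _))
    have key : plf y y' κ v a = plf y y' κ v b := by
      funext i
      have hdiff := plf_sub y y' v κ a b ha hb i
      have hloga : (fun j => Real.log (a j) - Real.log (b j)) = u := funext hlog
      rw [hloga] at hdiff
      have hcoef : ∀ r, (κ r * Real.exp (∑ j, v r j * Real.log (b j)) * psi ((Zmat v).mulVec u r))
          * ((Zmat v).mulVec u r) = lam r * t r := by
        intro r
        rw [hκdef, htdef]
        have hne : Real.exp (∑ j, v r j * Real.log (b j)) * psi ((Zmat v).mulVec u r) ≠ 0 :=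
          ne_of_gt (mul_pos (Real.exp_pos _) (psi_pos _))
        have hpsi : psi ((Zmat v).mulVec u r) ≠ 0 := ne_of_gt (psi_pos _)
        field_simp
      have hfun : (fun r => (κ r * Real.exp (∑ j, v r j * Real.log (b j))
            * psi ((Zmat v).mulVec u r)) * ((Zmat v).mulVec u r)) = fun r => lam r * t r :=
        funext hcoef
      rw [hfun] at hdiff
      have hlamt : (fun r => lam r * t r) = (Matrix.diagonal lam).mulVec t := by
        funext r
        rw [Matrix.mulVec_diagonal]
      have huw : u = (Matrix.diagonal mu).mulVec w := by
        funext j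
        rw [Matrix.mulVec_diagonal, hu]
      rw [hlamt, htdef, huw] at hdiff
      have := congrFun hMw i
      have h0 : plf y y' κ v a i - plf y y' κ v b i = 0 := by rw [hdiff]; exact this
      linarith
    exact hinj κ hκpos a b ha hb habne habG key
  · -- kernel condition implies injectivity
    intro hker κ hκ a b ha hb hab habG hplf
    set w : Fin n → ℝ := a - b with hwdef
    have hw0 : w ≠ 0 := by
      intro hcon
      exact hab (by
        funext j
        have := congrFun hcon j
        simp only [hwdef, Pi.sub_apply, Pi.zero_apply] at this
        linarith)
    set u : Fin n → ℝ := fun j => Real.log (a j) - Real.log (b j) with hu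
    set mu : Fin n → ℝ := fun j => if a j = b j then 1 else u j / w j with hmudef
    have hmu : ∀ j, 0 < mu j := by
      intro j
      simp only [hmudef]
      by_cases hj : a j = b j
      · simp [hj]
      · rw [if_neg hj]
        rcases lt_or_gt_of_ne hj with hlt | hgt
        · have h1 : u j < 0 := by
            rw [hu]
            simp only []
            have := Real.log_lt_log (ha j) hlt
            linarith
          have h2 : w j < 0 := by
            rw [hwdef]; simp only [Pi.sub_apply]; linarith
          exact div_pos_of_neg_of_neg h1 h2
        · have h1 : 0 < u j := by
            rw [hu]
            simp only []
            have := Real.log_lt_log (hb j) hgt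
            linarith
          have h2 : 0 < w j := by
            rw [hwdef]; simp only [Pi.sub_apply]; linarith
          exact div_pos h1 h2
    have huw : ∀ j, mu j * w j = u j := by
      intro j
      simp only [hmudef]
      by_cases hj : a j = b j
      · rw [if_pos hj]
        have h1 : w j = 0 := by rw [hwdef]; simp [hj]
        have h2 : u j = 0 := by rw [hu]; simp [hj]
        rw [h1, h2, mul_zero]
      · rw [if_neg hj]
        have h1 : w j ≠ 0 := by
          rw [hwdef]
          simp only [Pi.sub_apply]
          exact sub_ne_zero.mpr hj
        rw [div_mul_cancel₀ _ h1]
    set t : Fin m → ℝ := (Zmat v).mulVec u with htdef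
    set lam : Fin m → ℝ := fun r =>
      κ r * Real.exp (∑ j, v r j * Real.log (b j)) * psi (t r) with hlamdef
    have hlam : ∀ r, 0 < lam r :=
      fun r => mul_pos (mul_pos (hκ r) (Real.exp_pos _)) (psi_pos _)
    have hMw : (stoich y y').mulVec ((Matrix.diagonal lam).mulVec
        ((Zmat v).mulVec ((Matrix.diagonal mu).mulVec w))) = 0 := by
      funext i
      have hdiff := plf_sub y y' v κ a b ha hb i
      have hdm : (Matrix.diagonal mu).mulVec w = u := by
        funext j
        rw [Matrix.mulVec_diagonal]
        exact huw j
      have hdl : (Matrix.diagonal lam).mulVec t = fun r => lam r * t r := by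
        funext r
        rw [Matrix.mulVec_diagonal]
      rw [hdm, ← htdef, hdl]
      have hfun : (fun r => (κ r * Real.exp (∑ j, v r j * Real.log (b j))
            * psi ((Zmat v).mulVec (fun j => Real.log (a j) - Real.log (b j)) r))
            * ((Zmat v).mulVec (fun j => Real.log (a j) - Real.log (b j)) r))
          = fun r => lam r * t r := by
        funext r
        rw [hlamdef, htdef, hu]
      rw [hfun] at hdiff
      have hzero : plf y y' κ v a i - plf y y' κ v b i = 0 := by
        rw [hplf]; ring
      rw [hdiff] at hzero
      simpa using hzero
    have := hker lam hlam mu hmu w habG hMw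
    exact hw0 this

end Analysis

section SignAnalysis

open Matrix

variable {n m s : ℕ}

/-- The coefficient `det(A_{J,C}) det(Z_{C,J})`. -/
noncomputable def coefP (y y' : Fin m → Fin n → ℝ) (v : Fin m → Fin n → ℝ) (s : ℕ)
    (q : {C : Finset (Fin m) // C.card = s} × {J : Finset (Fin n) // J.card = s}) : ℝ :=
  subDetA y y' s q.2.1 q.1.1 q.2.2 q.1.2 * subDetZ v s q.1.1 q.2.1 q.1.2 q.2.2

/-- The key polynomial in `(lam, mu)`. -/
noncomputable def pPoly (y y' : Fin m → Fin n → ℝ) (v : Fin m → Fin n → ℝ) (s : ℕ)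
    (lam : Fin m → ℝ) (mu : Fin n → ℝ) : ℝ :=
  ∑ q : {C : Finset (Fin m) // C.card = s} × {J : Finset (Fin n) // J.card = s},
    (∏ r ∈ q.1.1, lam r) * (∏ j ∈ q.2.1, mu j) * coefP y y' v s q

theorem detP_expand' (y y' : Fin m → Fin n → ℝ) (v : Fin m → Fin n → ℝ)
    (B : Matrix (Fin n) (Fin s) ℝ) (Bp : Matrix (Fin s) (Fin n) ℝ)
    (hA : B * (Bp * stoich y y') = stoich y y') (lam : Fin m → ℝ) (mu : Fin n → ℝ) :
    ((Bp * stoich y y') * (Matrix.diagonal lam * (Zmat v * (Matrix.diagonal mu * B)))).det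
      = pPoly y y' v s lam mu := by
  rw [detP_expand y y' v B Bp hA lam mu, pPoly, Fintype.sum_prod_type]
  rfl

/-- If all nonzero coefficients have the same sign and one is nonzero, the polynomial is
nonvanishing on the positive orthant. -/
theorem pPoly_ne_zero (y y' : Fin m → Fin n → ℝ) (v : Fin m → Fin n → ℝ)
    (hsame : ∀ q q', coefP y y' v s q ≠ 0 → coefP y y' v s q' ≠ 0 →
      (0 < coefP y y' v s q ↔ 0 < coefP y y' v s q'))
    (hex : ∃ q, coefP y y' v s q ≠ 0)
    (lam : Fin m → ℝ) (hlam : ∀ r, 0 < lam r) (mu : Fin n → ℝ) (hmu : ∀ j, 0 < mu j) :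
    pPoly y y' v s lam mu ≠ 0 := by
  obtain ⟨q0, hq0⟩ := hex
  have hprodpos : ∀ (q : {C : Finset (Fin m) // C.card = s} ×
      {J : Finset (Fin n) // J.card = s}),
      0 < (∏ r ∈ q.1.1, lam r) * (∏ j ∈ q.2.1, mu j) :=
    fun q => mul_pos (Finset.prod_pos fun r _ => hlam r) (Finset.prod_pos fun j _ => hmu j)
  rcases lt_or_gt_of_ne hq0 with hneg | hpos
  · -- all coefficients nonpositive
    have hnp : ∀ q, coefP y y' v s q ≤ 0 := by
      intro q
      by_contra hgt
      push_neg at hgt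
      have h1 := (hsame q q0 (ne_of_gt hgt) hq0).mp hgt
      linarith
    have : 0 < -pPoly y y' v s lam mu := by
      rw [pPoly, ← Finset.sum_neg_distrib]
      refine Finset.sum_pos' (fun q _ => ?_) ⟨q0, Finset.mem_univ _, ?_⟩
      · have := hnp q
        nlinarith [hprodpos q]
      · nlinarith [hprodpos q0]
    intro hcon
    rw [hcon] at this
    simp at this
  · -- all coefficients nonnegative
    have hnn : ∀ q, 0 ≤ coefP y y' v s q := by
      intro q
      by_contra hlt
      push_neg at hlt
      have h1 := (hsame q0 q hq0 (ne_of_lt hlt)).mp hpos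
      linarith
    have : 0 < pPoly y y' v s lam mu := by
      rw [pPoly]
      refine Finset.sum_pos' (fun q _ => ?_) ⟨q0, Finset.mem_univ _, ?_⟩
      · have := hnn q
        nlinarith [hprodpos q]
      · nlinarith [hprodpos q0]
    exact ne_of_gt this

end SignAnalysis

section SignAnalysis2

open Matrix

variable {n m s : ℕ}

theorem prodIf_le_one {k : ℕ} (C C0 : Finset (Fin k)) (eps : ℝ) (heps : 0 < eps) (heps1 : eps ≤ 1) :
    ∏ r ∈ C, (if r ∈ C0 then (1:ℝ) else eps) ≤ 1 :=
  Finset.prod_le_one (fun r _ => by positivity) (fun r _ => by split <;> simp [heps1])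

theorem prodIf_pos {k : ℕ} (C C0 : Finset (Fin k)) (eps : ℝ) (heps : 0 < eps) :
    0 < ∏ r ∈ C, (if r ∈ C0 then (1:ℝ) else eps) :=
  Finset.prod_pos (fun r _ => by positivity)

theorem prodIf_le_eps {k : ℕ} (C C0 : Finset (Fin k)) (hcard : C.card = C0.card)
    (hne : C ≠ C0) (eps : ℝ) (heps : 0 < eps) (heps1 : eps ≤ 1) :
    ∏ r ∈ C, (if r ∈ C0 then (1:ℝ) else eps) ≤ eps := by
  have hnsub : ¬ C ⊆ C0 := by
    intro hsub
    exact hne (Finset.eq_of_subset_of_card_le hsub (le_of_eq hcard.symm))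
  obtain ⟨r0, hr0C, hr0C0⟩ := Finset.not_subset.mp hnsub
  rw [← Finset.mul_prod_erase C _ hr0C, if_neg hr0C0]
  calc eps * ∏ r ∈ C.erase r0, (if r ∈ C0 then (1:ℝ) else eps)
      ≤ eps * 1 := by
        refine mul_le_mul_of_nonneg_left ?_ (le_of_lt heps)
        exact prodIf_le_one _ _ _ heps heps1
    _ = eps := mul_one eps

/-- At a suitable positive point, `pPoly` has the sign of a prescribed nonzero coefficient. -/
theorem pPoly_sign_at (y y' : Fin m → Fin n → ℝ) (v : Fin m → Fin n → ℝ)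
    (q0 : {C : Finset (Fin m) // C.card = s} × {J : Finset (Fin n) // J.card = s})
    (hq0 : coefP y y' v s q0 ≠ 0) :
    ∃ (lam : Fin m → ℝ) (mu : Fin n → ℝ), (∀ r, 0 < lam r) ∧ (∀ j, 0 < mu j) ∧
      ((0 < coefP y y' v s q0 → 0 < pPoly y y' v s lam mu) ∧
       (coefP y y' v s q0 < 0 → pPoly y y' v s lam mu < 0)) := by
  classical
  set c0 := coefP y y' v s q0 with hc0
  set S : ℝ := ∑ q : {C : Finset (Fin m) // C.card = s} × {J : Finset (Fin n) // J.card = s},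
    |coefP y y' v s q| with hS
  have hS0 : 0 ≤ S := Finset.sum_nonneg fun q _ => abs_nonneg _
  set eps : ℝ := |c0| / (2 * (S + 1)) with heps
  have hepspos : 0 < eps := div_pos (abs_pos.mpr hq0) (by linarith)
  have hc0S : |c0| ≤ S := Finset.single_le_sum (f := fun q => |coefP y y' v s q|)
    (fun q _ => abs_nonneg _) (Finset.mem_univ q0)
  have heps1 : eps ≤ 1 := by
    rw [heps, div_le_one (by linarith)]
    linarith
  set lam : Fin m → ℝ := fun r => if r ∈ q0.1.1 then 1 else eps with hlamdef
  set mu : Fin n → ℝ := fun j => if j ∈ q0.2.1 then 1 else eps with hmudef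
  have hlampos : ∀ r, 0 < lam r := fun r => by
    simp only [hlamdef]; split <;> [norm_num; exact hepspos]
  have hmupos : ∀ j, 0 < mu j := fun j => by
    simp only [hmudef]; split <;> [norm_num; exact hepspos]
  -- value of the distinguished term
  have hterm0 : (∏ r ∈ q0.1.1, lam r) * (∏ j ∈ q0.2.1, mu j) * coefP y y' v s q0 = c0 := by
    have h1 : ∏ r ∈ q0.1.1, lam r = 1 :=
      Finset.prod_eq_one fun r hr => by simp only [hlamdef]; rw [if_pos hr]
    have h2 : ∏ j ∈ q0.2.1, mu j = 1 :=
      Finset.prod_eq_one fun j hj => by simp only [hmudef]; rw [if_pos hj]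
    rw [h1, h2, hc0]; ring
  -- bound on the other terms
  have hbound : ∀ q, q ≠ q0 →
      |(∏ r ∈ q.1.1, lam r) * (∏ j ∈ q.2.1, mu j) * coefP y y' v s q|
        ≤ eps * |coefP y y' v s q| := by
    intro q hne
    have hplam : 0 < ∏ r ∈ q.1.1, lam r := Finset.prod_pos fun r _ => hlampos r
    have hpmu : 0 < ∏ j ∈ q.2.1, mu j := Finset.prod_pos fun j _ => hmupos j
    have hkey : (∏ r ∈ q.1.1, lam r) * (∏ j ∈ q.2.1, mu j) ≤ eps := by
      have hcases : q.1.1 ≠ q0.1.1 ∨ q.2.1 ≠ q0.2.1 := by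
        by_contra hcon
        push_neg at hcon
        exact hne (Prod.ext (Subtype.ext hcon.1) (Subtype.ext hcon.2))
      have hl1 : ∏ r ∈ q.1.1, lam r ≤ 1 := prodIf_le_one _ _ _ hepspos heps1
      have hm1 : ∏ j ∈ q.2.1, mu j ≤ 1 := prodIf_le_one _ _ _ hepspos heps1
      rcases hcases with h | h
      · have hle : ∏ r ∈ q.1.1, lam r ≤ eps :=
          prodIf_le_eps _ _ (by rw [q.1.2, q0.1.2]) h eps hepspos heps1
        nlinarith
      · have hle : ∏ j ∈ q.2.1, mu j ≤ eps :=
          prodIf_le_eps _ _ (by rw [q.2.2, q0.2.2]) h eps hepspos heps1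
        nlinarith
    rw [abs_mul, abs_mul, abs_of_pos hplam, abs_of_pos hpmu]
    have h1 : 0 ≤ |coefP y y' v s q| := abs_nonneg _
    nlinarith
  -- split off the distinguished term
  have hsplit : pPoly y y' v s lam mu = c0 + ∑ q ∈ Finset.univ.erase q0,
      (∏ r ∈ q.1.1, lam r) * (∏ j ∈ q.2.1, mu j) * coefP y y' v s q := by
    rw [pPoly, ← Finset.add_sum_erase _ _ (Finset.mem_univ q0), hterm0]
  have hrest : |∑ q ∈ Finset.univ.erase q0,
      (∏ r ∈ q.1.1, lam r) * (∏ j ∈ q.2.1, mu j) * coefP y y' v s q| ≤ |c0| / 2 := by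
    calc |∑ q ∈ Finset.univ.erase q0,
        (∏ r ∈ q.1.1, lam r) * (∏ j ∈ q.2.1, mu j) * coefP y y' v s q|
        ≤ ∑ q ∈ Finset.univ.erase q0,
          |(∏ r ∈ q.1.1, lam r) * (∏ j ∈ q.2.1, mu j) * coefP y y' v s q| :=
          Finset.abs_sum_le_sum_abs _ _
      _ ≤ ∑ q ∈ Finset.univ.erase q0, eps * |coefP y y' v s q| :=
          Finset.sum_le_sum fun q hq => hbound q (Finset.ne_of_mem_erase hq)
      _ ≤ ∑ q : {C : Finset (Fin m) // C.card = s} × {J : Finset (Fin n) // J.card = s},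
          eps * |coefP y y' v s q| :=
          Finset.sum_le_sum_of_subset_of_nonneg (Finset.erase_subset _ _)
            (fun q _ _ => mul_nonneg (le_of_lt hepspos) (abs_nonneg _))
      _ = eps * S := by rw [hS, Finset.mul_sum]
      _ ≤ |c0| / 2 := by
          rw [heps]
          rw [div_mul_eq_mul_div, div_le_div_iff₀ (by linarith) (by norm_num)]
          nlinarith [abs_nonneg c0]
  refine ⟨lam, mu, hlampos, hmupos, ?_, ?_⟩
  · intro hpos
    have habs : |c0| = c0 := abs_of_pos hpos
    rw [hsplit]
    have := abs_le.mp hrest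
    rw [habs] at this
    linarith [this.1]
  · intro hneg
    have habs : |c0| = -c0 := abs_of_neg hneg
    rw [hsplit]
    have := abs_le.mp hrest
    rw [habs] at this
    linarith [this.2]

end SignAnalysis2

section IVT

open Matrix

variable {n m s : ℕ}

theorem interp_pos {a b θ : ℝ} (ha : 0 < a) (hb : 0 < b) (h0 : 0 ≤ θ) (h1 : θ ≤ 1) :
    0 < (1 - θ) * a + θ * b := by
  rcases lt_or_eq_of_le h1 with h | h
  · nlinarith
  · subst h; nlinarith

theorem pPoly_zero_of_mixed (y y' : Fin m → Fin n → ℝ) (v : Fin m → Fin n → ℝ)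
    (q1 q2 : {C : Finset (Fin m) // C.card = s} × {J : Finset (Fin n) // J.card = s})
    (h1 : 0 < coefP y y' v s q1) (h2 : coefP y y' v s q2 < 0) :
    ∃ (lam : Fin m → ℝ) (mu : Fin n → ℝ), (∀ r, 0 < lam r) ∧ (∀ j, 0 < mu j) ∧
      pPoly y y' v s lam mu = 0 := by
  obtain ⟨lam1, mu1, hlam1, hmu1, hsgn1, -⟩ := pPoly_sign_at y y' v q1 (ne_of_gt h1)
  obtain ⟨lam2, mu2, hlam2, hmu2, -, hsgn2⟩ := pPoly_sign_at y y' v q2 (ne_of_lt h2)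
  have hP1 : 0 < pPoly y y' v s lam1 mu1 := hsgn1 h1
  have hP2 : pPoly y y' v s lam2 mu2 < 0 := hsgn2 h2
  set F : ℝ → ℝ := fun θ => pPoly y y' v s
    (fun r => (1 - θ) * lam1 r + θ * lam2 r) (fun j => (1 - θ) * mu1 j + θ * mu2 j) with hF
  have hcont : Continuous F := by
    rw [hF]
    unfold pPoly
    refine continuous_finset_sum _ fun q _ => ?_
    refine Continuous.mul (Continuous.mul ?_ ?_) continuous_const
    · refine continuous_finset_prod _ fun r _ => ?_
      fun_prop
    · refine continuous_finset_prod _ fun j _ => ?_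
      fun_prop
  have ha1 : (fun r => (1 - (0:ℝ)) * lam1 r + 0 * lam2 r) = lam1 := by funext r; ring
  have ha2 : (fun j => (1 - (0:ℝ)) * mu1 j + 0 * mu2 j) = mu1 := by funext j; ring
  have hb1 : (fun r => (1 - (1:ℝ)) * lam1 r + 1 * lam2 r) = lam2 := by funext r; ring
  have hb2 : (fun j => (1 - (1:ℝ)) * mu1 j + 1 * mu2 j) = mu2 := by funext j; ring
  have hF0 : F 0 = pPoly y y' v s lam1 mu1 := by
    have h : F 0 = pPoly y y' v s (fun r => (1 - (0:ℝ)) * lam1 r + 0 * lam2 r)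
        (fun j => (1 - (0:ℝ)) * mu1 j + 0 * mu2 j) := rfl
    rw [h, ha1, ha2]
  have hF1 : F 1 = pPoly y y' v s lam2 mu2 := by
    have h : F 1 = pPoly y y' v s (fun r => (1 - (1:ℝ)) * lam1 r + 1 * lam2 r)
        (fun j => (1 - (1:ℝ)) * mu1 j + 1 * mu2 j) := rfl
    rw [h, hb1, hb2]
  have hmem : (0:ℝ) ∈ Set.Icc (F 1) (F 0) := by
    rw [hF0, hF1]
    exact ⟨le_of_lt hP2, le_of_lt hP1⟩
  obtain ⟨θ, hθ, hFθ⟩ := intermediate_value_Icc' (by norm_num : (0:ℝ) ≤ 1)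
    hcont.continuousOn hmem
  exact ⟨(fun r => (1 - θ) * lam1 r + θ * lam2 r), (fun j => (1 - θ) * mu1 j + θ * mu2 j),
    fun r => interp_pos (hlam1 r) (hlam2 r) hθ.1 hθ.2,
    fun j => interp_pos (hmu1 j) (hmu2 j) hθ.1 hθ.2, hFθ⟩

end IVT

/-- Proposition `det-criterion`. -/
theorem stmt5 {n m s : ℕ}
    (y y' : Fin m → Fin n → ℝ)
    (hs : Module.finrank ℝ (stoichSpan y y') = s)
    (v : Fin m → Fin n → ℝ) :
    InjOverPL y y' v ↔
      ((∀ (J₁ J₂ : Finset (Fin n)) (C₁ C₂ : Finset (Fin m))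
          (hJ₁ : J₁.card = s) (hJ₂ : J₂.card = s) (hC₁ : C₁.card = s) (hC₂ : C₂.card = s),
          subDetA y y' s J₁ C₁ hJ₁ hC₁ * subDetZ v s C₁ J₁ hC₁ hJ₁ ≠ 0 →
          subDetA y y' s J₂ C₂ hJ₂ hC₂ * subDetZ v s C₂ J₂ hC₂ hJ₂ ≠ 0 →
          (0 < subDetA y y' s J₁ C₁ hJ₁ hC₁ * subDetZ v s C₁ J₁ hC₁ hJ₁ ↔
           0 < subDetA y y' s J₂ C₂ hJ₂ hC₂ * subDetZ v s C₂ J₂ hC₂ hJ₂)) ∧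
        (∃ (J : Finset (Fin n)) (C : Finset (Fin m)) (hJ : J.card = s) (hC : C.card = s),
          subDetA y y' s J C hJ hC * subDetZ v s C J hC hJ ≠ 0)) := by
  obtain ⟨B, Bp, hBmem, hBinj, hBP⟩ := exists_B y y' hs
  have hA := hA_of_hBP y y' B Bp hBP
  constructor
  · intro hinj
    have hker := (inj_iff_ker y y' v).mp hinj
    have hne : ∀ lam, (∀ r, 0 < lam r) → ∀ mu, (∀ j, 0 < mu j) →
        pPoly y y' v s lam mu ≠ 0 := by
      intro lam hlam mu hmu
      rw [← detP_expand' y y' v B Bp hA lam mu]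
      exact (det_ne_iff_ker y y' v B Bp hBmem hBinj hBP lam mu).mpr
        (fun w hw h => hker lam hlam mu hmu w hw h)
    constructor
    · intro J₁ J₂ C₁ C₂ hJ₁ hJ₂ hC₁ hC₂ hne1 hne2
      by_contra hiff
      set q1 : {C : Finset (Fin m) // C.card = s} × {J : Finset (Fin n) // J.card = s} :=
        (⟨C₁, hC₁⟩, ⟨J₁, hJ₁⟩) with hq1
      set q2 : {C : Finset (Fin m) // C.card = s} × {J : Finset (Fin n) // J.card = s} :=
        (⟨C₂, hC₂⟩, ⟨J₂, hJ₂⟩) with hq2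
      have hc1 : coefP y y' v s q1 ≠ 0 := hne1
      have hc2 : coefP y y' v s q2 ≠ 0 := hne2
      have hmixed : (0 < coefP y y' v s q1 ∧ coefP y y' v s q2 < 0) ∨
          (coefP y y' v s q1 < 0 ∧ 0 < coefP y y' v s q2) := by
        rcases lt_or_gt_of_ne hc1 with ha | ha <;> rcases lt_or_gt_of_ne hc2 with hb | hb
        · exact absurd (Iff.intro (fun h => absurd h (not_lt.mpr (le_of_lt ha)))
            (fun h => absurd h (not_lt.mpr (le_of_lt hb)))) hiff
        · exact Or.inr ⟨ha, hb⟩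
        · exact Or.inl ⟨ha, hb⟩
        · exact absurd (Iff.intro (fun _ => hb) (fun _ => ha)) hiff
      rcases hmixed with ⟨hp, hn⟩ | ⟨hn, hp⟩
      · obtain ⟨lam, mu, hlam, hmu, h0⟩ := pPoly_zero_of_mixed y y' v q1 q2 hp hn
        exact hne lam hlam mu hmu h0
      · obtain ⟨lam, mu, hlam, hmu, h0⟩ := pPoly_zero_of_mixed y y' v q2 q1 hp hn
        exact hne lam hlam mu hmu h0
    · by_contra hnex
      push_neg at hnex
      have hz : pPoly y y' v s (fun _ => 1) (fun _ => 1) = 0 := by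
        rw [pPoly]
        refine Finset.sum_eq_zero fun q _ => ?_
        have := hnex q.2.1 q.1.1 q.2.2 q.1.2
        rw [show coefP y y' v s q = subDetA y y' s q.2.1 q.1.1 q.2.2 q.1.2 *
          subDetZ v s q.1.1 q.2.1 q.1.2 q.2.2 from rfl, this, mul_zero]
      exact hne (fun _ => 1) (fun _ => one_pos) (fun _ => 1) (fun _ => one_pos) hz
  · rintro ⟨hsame, hex⟩
    rw [inj_iff_ker]
    intro lam hlam mu hmu w hw hMw
    have hdet : pPoly y y' v s lam mu ≠ 0 := by
      refine pPoly_ne_zero y y' v ?_ ?_ lam hlam mu hmu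
      · intro q q' h h'
        exact hsame q.2.1 q'.2.1 q.1.1 q'.1.1 q.2.2 q'.2.2 q.1.2 q'.1.2 h h'
      · obtain ⟨J, C, hJ, hC, hne0⟩ := hex
        exact ⟨(⟨C, hC⟩, ⟨J, hJ⟩), hne0⟩
    rw [← detP_expand' y y' v B Bp hA lam mu] at hdet
    exact (det_ne_iff_ker y y' v B Bp hBmem hBinj hBP lam mu).mp hdet w hw hMw
end CRN
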